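/- Let $K:[0,1]\to\mathbb{R}$ with $g_K(s) = sK(s)$ such that $g_K'$ and $g_K''$ are bounded by $M$ on $(0,1)$, and let $p \in (0,1)$. With $u_{j,k} = j/(k+1)$, define $d_{i,k}(g_K) := \frac{1}{i}\sum_{j=2}^{i} u_{j,k}^{p-1} g_K'(u_{j,k}^p) - u_{i,k}^{-1}\int_0^{u_{i,k}} s^{p-1} g_K'(s^p)\, ds$. Then there exists a constant $C = C(K,p) > 0$ such that $|d_{i,k}(g_K)| \le C\, u_{i,k}^{-1} (k+1)^{-p}$ for all $2 \le i \le k$. -/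

import Mathlib

open MeasureTheory

private lemma kernel_rs_aux (g' g'' : ℝ → ℝ) (p M : ℝ)
    (hp : 0 < p) (hp1 : p < 1) (hM : 0 < M)
    (hderiv2 : ∀ s ∈ Set.Ioo (0 : ℝ) 1, HasDerivAt g' (g'' s) s)
    (hbd1 : ∀ s ∈ Set.Ioo (0 : ℝ) 1, |g' s| ≤ M)
    (hbd2 : ∀ s ∈ Set.Ioo (0 : ℝ) 1, |g'' s| ≤ M)
    (k i : ℕ) (hi2 : 2 ≤ i) (hik : i ≤ k) :
    |(1 / ((k : ℝ) + 1)) * ∑ j ∈ Finset.Icc 2 i,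
          ((j : ℝ) / ((k : ℝ) + 1)) ^ (p - 1) * g' (((j : ℝ) / ((k : ℝ) + 1)) ^ p)
        - ∫ s in (0 : ℝ)..((i : ℝ) / ((k : ℝ) + 1)), s ^ (p - 1) * g' (s ^ p)|
      ≤ (M * (∑' n : ℕ, (n : ℝ) ^ (p - 2)) + M / p) * ((k : ℝ) + 1) ^ (-p) := by
  have hc : (0 : ℝ) < (k : ℝ) + 1 := by positivity
  set c : ℝ := (k : ℝ) + 1 with hcdef
  set f : ℝ → ℝ := fun s => s ^ (p - 1) * g' (s ^ p) with hfdef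
  set f' : ℝ → ℝ := fun s =>
    (p - 1) * s ^ (p - 2) * g' (s ^ p) + s ^ (p - 1) * (g'' (s ^ p) * (p * s ^ (p - 1)))
    with hf'def
  set u : ℕ → ℝ := fun m => ((m : ℝ) + 1) / c with hudef
  have hmem : ∀ s ∈ Set.Ioo (0 : ℝ) 1, s ^ p ∈ Set.Ioo (0 : ℝ) 1 := fun s hs =>
    ⟨Real.rpow_pos_of_pos hs.1 p, Real.rpow_lt_one hs.1.le hs.2 hp⟩
  -- derivative of f
  have hfd : ∀ s ∈ Set.Ioo (0 : ℝ) 1, HasDerivAt f (f' s) s := by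
    intro s hs
    have h1 : HasDerivAt (fun x : ℝ => x ^ (p - 1)) ((p - 1) * s ^ (p - 2)) s := by
      have h := Real.hasDerivAt_rpow_const (p := p - 1) (x := s) (Or.inl hs.1.ne')
      rw [show p - 1 - 1 = p - 2 by ring] at h
      exact h
    have h2 : HasDerivAt (fun x : ℝ => x ^ p) (p * s ^ (p - 1)) s :=
      Real.hasDerivAt_rpow_const (Or.inl hs.1.ne')
    have h3 : HasDerivAt g' (g'' (s ^ p)) (s ^ p) := hderiv2 _ (hmem s hs)
    exact h1.mul (h3.comp s h2)
  -- bound on f'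
  have hf'bd : ∀ s ∈ Set.Ioo (0 : ℝ) 1, |f' s| ≤ M * s ^ (p - 2) := by
    intro s hs
    have hs0 := hs.1
    have hsp : (0 : ℝ) ≤ s ^ (p - 1) := Real.rpow_nonneg hs0.le _
    have hsp2 : (0 : ℝ) ≤ s ^ (p - 2) := Real.rpow_nonneg hs0.le _
    have hg1 := hbd1 _ (hmem s hs)
    have hg2 := hbd2 _ (hmem s hs)
    have hmul : s ^ (p - 1) * s ^ (p - 1) ≤ s ^ (p - 2) := by
      rw [← Real.rpow_add hs0]
      exact Real.rpow_le_rpow_of_exponent_ge hs0 hs.2.le (by linarith)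
    have e1 : |(p - 1) * s ^ (p - 2) * g' (s ^ p)| ≤ (1 - p) * s ^ (p - 2) * M := by
      rw [abs_mul, abs_mul, abs_of_nonneg hsp2, abs_of_neg (by linarith : p - 1 < 0)]
      nlinarith [mul_le_mul_of_nonneg_left hg1
        (mul_nonneg (by linarith : (0:ℝ) ≤ 1 - p) hsp2), abs_nonneg (g' (s ^ p))]
    have e2 : |s ^ (p - 1) * (g'' (s ^ p) * (p * s ^ (p - 1)))| ≤ p * s ^ (p - 2) * M := by
      rw [abs_mul, abs_mul, abs_mul, abs_of_nonneg hsp, abs_of_nonneg hp.le]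
      calc s ^ (p - 1) * (|g'' (s ^ p)| * (p * s ^ (p - 1)))
          ≤ s ^ (p - 1) * (M * (p * s ^ (p - 1))) :=
            mul_le_mul_of_nonneg_left
              (mul_le_mul_of_nonneg_right hg2 (by positivity)) hsp
        _ = (s ^ (p - 1) * s ^ (p - 1)) * (p * M) := by ring
        _ ≤ s ^ (p - 2) * (p * M) :=
            mul_le_mul_of_nonneg_right hmul (by positivity)
        _ = p * s ^ (p - 2) * M := by ring
    calc |f' s| ≤ |(p - 1) * s ^ (p - 2) * g' (s ^ p)|
          + |s ^ (p - 1) * (g'' (s ^ p) * (p * s ^ (p - 1)))| := abs_add_le _ _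
      _ ≤ (1 - p) * s ^ (p - 2) * M + p * s ^ (p - 2) * M := add_le_add e1 e2
      _ = M * s ^ (p - 2) := by ring
  -- basic facts about u
  have hu0 : ∀ m : ℕ, 0 < u m := by
    intro m; simp only [hudef]; positivity
  have hult : ∀ m : ℕ, m + 1 ≤ k → u m < 1 := by
    intro m hm
    simp only [hudef]
    rw [div_lt_one hc]
    have : ((m : ℝ) + 1) ≤ (k : ℝ) := by exact_mod_cast hm
    linarith
  have humono : ∀ m n : ℕ, m ≤ n → u m ≤ u n := by
    intro m n h
    simp only [hudef]
    have h' : (m : ℝ) ≤ (n : ℝ) := by exact_mod_cast h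
    gcongr

  -- interval integrability inside (0,1)
  have hfc : ∀ a b : ℝ, 0 < a → a ≤ b → b < 1 → IntervalIntegrable f volume a b := by
    intro a b ha hab hb
    apply ContinuousOn.intervalIntegrable
    intro s hs
    rw [Set.uIcc_of_le hab] at hs
    exact ((hfd s ⟨lt_of_lt_of_le ha hs.1, lt_of_le_of_lt hs.2 hb⟩).continuousAt).continuousWithinAt
  -- pointwise bound on f
  have hfbd : ∀ s ∈ Set.Ioo (0 : ℝ) 1, ‖f s‖ ≤ M * s ^ (p - 1) := by
    intro s hs'
    rw [Real.norm_eq_abs]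
    simp only [hfdef]
    rw [abs_mul, abs_of_nonneg (Real.rpow_nonneg hs'.1.le _)]
    calc s ^ (p - 1) * |g' (s ^ p)| ≤ s ^ (p - 1) * M :=
        mul_le_mul_of_nonneg_left (hbd1 _ (hmem s hs')) (Real.rpow_nonneg hs'.1.le _)
      _ = M * s ^ (p - 1) := mul_comm _ _
  have hu0lt1 : u 0 < 1 := hult 0 (by omega)
  have hsub0 : Set.Ioc (0 : ℝ) (u 0) ⊆ Set.Ioo 0 1 := fun s hs =>
    ⟨hs.1, lt_of_le_of_lt hs.2 hu0lt1⟩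
  have hmono_rpow : IntervalIntegrable (fun s : ℝ => M * s ^ (p - 1)) volume 0 (u 0) :=
    (intervalIntegral.intervalIntegrable_rpow' (by linarith)).const_mul M
  -- integrability near 0
  have h01 : IntervalIntegrable f volume 0 (u 0) := by
    rw [intervalIntegrable_iff_integrableOn_Ioc_of_le (hu0 0).le]
    apply Integrable.mono' (g := fun s => M * s ^ (p - 1))
    · exact (intervalIntegrable_iff_integrableOn_Ioc_of_le (hu0 0).le).mp hmono_rpow
    · exact ContinuousOn.aestronglyMeasurable
        (fun s hs => ((hfd s (hsub0 hs)).continuousAt).continuousWithinAt) measurableSet_Ioc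
    · exact (ae_restrict_mem measurableSet_Ioc).mono fun s hs => hfbd s (hsub0 hs)
  -- value of (u 0)^p
  have hu0p : (u 0) ^ p = c ^ (-p) := by
    have h : u 0 = c⁻¹ := by simp [hudef]
    rw [h, Real.inv_rpow hc.le, ← Real.rpow_neg hc.le]
  -- boundary term bound
  have hbdy : |∫ s in (0 : ℝ)..(u 0), f s| ≤ M / p * c ^ (-p) := by
    have hle : ∀ᵐ t ∂volume.restrict (Set.uIoc 0 (u 0)), ‖f t‖ ≤ M * t ^ (p - 1) := by
      rw [Set.uIoc_of_le (hu0 0).le]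
      exact (ae_restrict_mem measurableSet_Ioc).mono fun s hs => hfbd s (hsub0 hs)
    have h := intervalIntegral.norm_integral_le_of_norm_le (hu0 0).le
      ((ae_restrict_iff' measurableSet_Ioc).mp (by rw [← Set.uIoc_of_le (hu0 0).le]; exact hle)) hmono_rpow
    rw [Real.norm_eq_abs] at h
    refine h.trans ?_
    rw [intervalIntegral.integral_const_mul,
      integral_rpow (Or.inl (by linarith : (-1 : ℝ) < p - 1)),
      show p - 1 + 1 = p by ring, Real.zero_rpow hp.ne', hu0p, sub_zero]
    exact le_of_eq (by ring)
  -- per-interval bound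
  have hterm : ∀ m : ℕ, m < i - 1 →
      |(1 / c) * f (u (m + 1)) - ∫ s in (u m)..(u (m + 1)), f s|
        ≤ M * ((m : ℝ) + 1) ^ (p - 2) * c ^ (-p) := by
    intro m hm
    have ha : 0 < u m := hu0 m
    have hab : u m ≤ u (m + 1) := humono m (m + 1) (by omega)
    have hb1 : u (m + 1) < 1 := hult (m + 1) (by omega)
    have hsub : Set.Icc (u m) (u (m + 1)) ⊆ Set.Ioo 0 1 := fun s hs =>
      ⟨lt_of_lt_of_le ha hs.1, lt_of_le_of_lt hs.2 hb1⟩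
    have hCbd : ∀ x ∈ Set.Icc (u m) (u (m + 1)), ‖f' x‖ ≤ M * (u m) ^ (p - 2) := by
      intro x hx
      rw [Real.norm_eq_abs]
      refine (hf'bd x (hsub hx)).trans ?_
      have hxp : x ^ (p - 2) ≤ (u m) ^ (p - 2) :=
        Real.rpow_le_rpow_of_nonpos ha hx.1 (by linarith)
      nlinarith
    have hMVT : ∀ s ∈ Set.Icc (u m) (u (m + 1)),
        ‖f (u (m + 1)) - f s‖ ≤ (M * (u m) ^ (p - 2)) * ‖u (m + 1) - s‖ := by
      intro s hs
      exact Convex.norm_image_sub_le_of_norm_hasDerivWithin_le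
        (fun x hx => (hfd x (hsub hx)).hasDerivWithinAt) hCbd (convex_Icc _ _) hs
        (Set.right_mem_Icc.mpr hab)
    have hdiff : u (m + 1) - u m = 1 / c := by
      simp only [hudef]
      push_cast
      ring
    have hfint : IntervalIntegrable f volume (u m) (u (m + 1)) := hfc _ _ ha hab hb1
    have hrw : (1 / c) * f (u (m + 1)) - ∫ s in (u m)..(u (m + 1)), f s
        = ∫ s in (u m)..(u (m + 1)), (f (u (m + 1)) - f s) := by
      rw [intervalIntegral.integral_sub intervalIntegrable_const hfint,
        intervalIntegral.integral_const, smul_eq_mul, hdiff]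
    rw [← Real.norm_eq_abs, hrw]
    have hbound : ‖∫ s in (u m)..(u (m + 1)), (f (u (m + 1)) - f s)‖
        ≤ (M * (u m) ^ (p - 2) * (1 / c)) * |u (m + 1) - u m| := by
      apply intervalIntegral.norm_integral_le_of_norm_le_const
      intro x hx
      rw [Set.uIoc_of_le hab] at hx
      have hx' : x ∈ Set.Icc (u m) (u (m + 1)) := ⟨hx.1.le, hx.2⟩
      refine (hMVT x hx').trans ?_
      have h1 : ‖u (m + 1) - x‖ ≤ 1 / c := by
        rw [Real.norm_eq_abs, abs_of_nonneg (by linarith [hx.2] : (0:ℝ) ≤ u (m+1) - x)]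
        linarith [hx.1, hdiff]
      have h2 : (0 : ℝ) ≤ M * (u m) ^ (p - 2) := by positivity
      exact mul_le_mul_of_nonneg_left h1 h2
    refine hbound.trans ?_
    have hupow : (u m) ^ (p - 2) = ((m : ℝ) + 1) ^ (p - 2) / c ^ (p - 2) := by
      simp only [hudef]
      rw [Real.div_rpow (by positivity) hc.le]
    have hexp : (1 / c) * (1 / c) = c ^ (-p) * c ^ (p - 2) := by
      rw [← Real.rpow_add hc, show -p + (p - 2) = -(2 : ℝ) by ring,
        show (2 : ℝ) = ((2 : ℕ) : ℝ) by norm_num, Real.rpow_neg hc.le, Real.rpow_natCast]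
      rw [one_div, ← mul_inv, sq]
    have hcp : c ^ (p - 2) ≠ 0 := (Real.rpow_pos_of_pos hc _).ne'
    rw [hdiff, abs_of_pos (by positivity : (0:ℝ) < 1 / c), hupow]
    refine le_of_eq ?_
    calc M * (((m : ℝ) + 1) ^ (p - 2) / c ^ (p - 2)) * (1 / c) * (1 / c)
        = M * ((m : ℝ) + 1) ^ (p - 2) * (1 / c * (1 / c)) / c ^ (p - 2) := by ring
      _ = M * ((m : ℝ) + 1) ^ (p - 2) * (c ^ (-p) * c ^ (p - 2)) / c ^ (p - 2) := by
          rw [hexp]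
      _ = M * ((m : ℝ) + 1) ^ (p - 2) * c ^ (-p) := by
          field_simp
  -- rewrite u (i-1)
  have hicast : ((i - 1 : ℕ) : ℝ) + 1 = (i : ℝ) := by
    have h2 : i - 1 + 1 = i := by omega
    calc ((i - 1 : ℕ) : ℝ) + 1 = ((i - 1 + 1 : ℕ) : ℝ) := by push_cast; ring
      _ = (i : ℝ) := by rw [h2]
  have hui : u (i - 1) = (i : ℝ) / c := by
    simp only [hudef]
    rw [hicast]
  have huim : u (i - 1) < 1 := by
    rw [hui, div_lt_one hc]
    have : (i : ℝ) ≤ (k : ℝ) := by exact_mod_cast hik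
    linarith
  have hadj : ∀ m, m < i - 1 → IntervalIntegrable f volume (u m) (u (m + 1)) :=
    fun m hm => hfc _ _ (hu0 m) (humono m (m + 1) (by omega)) (hult (m + 1) (by omega))
  have htel : ∑ m ∈ Finset.range (i - 1), ∫ s in (u m)..(u (m + 1)), f s
      = ∫ s in (u 0)..(u (i - 1)), f s :=
    intervalIntegral.sum_integral_adjacent_intervals hadj
  have h0i : IntervalIntegrable f volume (u 0) (u (i - 1)) :=
    hfc _ _ (hu0 0) (humono 0 (i - 1) (by omega)) huim
  -- rewrite the sum
  have hsum : ∑ j ∈ Finset.Icc 2 i, ((j : ℝ) / c) ^ (p - 1) * g' (((j : ℝ) / c) ^ p)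
      = ∑ m ∈ Finset.range (i - 1), f (u (m + 1)) := by
    rw [← Finset.Ico_add_one_right_eq_Icc, Finset.sum_Ico_eq_sum_range]
    rw [show i + 1 - 2 = i - 1 by omega]
    refine Finset.sum_congr rfl fun m _ => ?_
    have harg : ((2 + m : ℕ) : ℝ) / c = u (m + 1) := by
      simp only [hudef]; push_cast; ring_nf
    rw [harg]
  -- decomposition
  have hdecomp : (1 / c) * (∑ m ∈ Finset.range (i - 1), f (u (m + 1)))
        - ∫ s in (0 : ℝ)..(u (i - 1)), f s
      = (∑ m ∈ Finset.range (i - 1),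
          ((1 / c) * f (u (m + 1)) - ∫ s in (u m)..(u (m + 1)), f s))
        - ∫ s in (0 : ℝ)..(u 0), f s := by
    have hsplit : ∫ s in (0 : ℝ)..(u (i - 1)), f s
        = (∫ s in (0 : ℝ)..(u 0), f s) + ∫ s in (u 0)..(u (i - 1)), f s :=
      (intervalIntegral.integral_add_adjacent_intervals h01 h0i).symm
    rw [hsplit, Finset.sum_sub_distrib, htel, ← Finset.mul_sum]
    ring
  -- sum of bounds
  have hsummable : Summable (fun n : ℕ => (n : ℝ) ^ (p - 2)) :=
    Real.summable_nat_rpow.mpr (by linarith)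
  have hsumle : ∑ m ∈ Finset.range (i - 1), M * ((m : ℝ) + 1) ^ (p - 2) * c ^ (-p)
      ≤ M * (∑' n : ℕ, (n : ℝ) ^ (p - 2)) * c ^ (-p) := by
    have h1 : ∑ m ∈ Finset.range (i - 1), ((m : ℝ) + 1) ^ (p - 2)
        ≤ ∑' n : ℕ, (n : ℝ) ^ (p - 2) := by
      calc ∑ m ∈ Finset.range (i - 1), ((m : ℝ) + 1) ^ (p - 2)
          = ∑ m ∈ Finset.range (i - 1), (((m + 1 : ℕ)) : ℝ) ^ (p - 2) := by
            refine Finset.sum_congr rfl fun m _ => ?_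
            push_cast; ring_nf
        _ ≤ ∑ m ∈ Finset.range (i - 1 + 1), ((m : ℕ) : ℝ) ^ (p - 2) := by
            rw [Finset.sum_range_succ']
            exact le_add_of_nonneg_right (Real.rpow_nonneg (by norm_num) _)
        _ ≤ ∑' n : ℕ, (n : ℝ) ^ (p - 2) :=
            Summable.sum_le_tsum _ (fun n _ => Real.rpow_nonneg (Nat.cast_nonneg n) _) hsummable
    calc ∑ m ∈ Finset.range (i - 1), M * ((m : ℝ) + 1) ^ (p - 2) * c ^ (-p)
        = (∑ m ∈ Finset.range (i - 1), ((m : ℝ) + 1) ^ (p - 2)) * (M * c ^ (-p)) := by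
          rw [Finset.sum_mul]
          exact Finset.sum_congr rfl fun m _ => by ring
      _ ≤ (∑' n : ℕ, (n : ℝ) ^ (p - 2)) * (M * c ^ (-p)) :=
          mul_le_mul_of_nonneg_right h1 (by positivity)
      _ = M * (∑' n : ℕ, (n : ℝ) ^ (p - 2)) * c ^ (-p) := by ring
  -- final assembly
  rw [hsum, ← hui, hdecomp]
  calc |(∑ m ∈ Finset.range (i - 1),
          ((1 / c) * f (u (m + 1)) - ∫ s in (u m)..(u (m + 1)), f s))
        - ∫ s in (0 : ℝ)..(u 0), f s|
      ≤ |∑ m ∈ Finset.range (i - 1),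
          ((1 / c) * f (u (m + 1)) - ∫ s in (u m)..(u (m + 1)), f s)|
        + |∫ s in (0 : ℝ)..(u 0), f s| := abs_sub _ _
    _ ≤ (∑ m ∈ Finset.range (i - 1),
          |(1 / c) * f (u (m + 1)) - ∫ s in (u m)..(u (m + 1)), f s|)
        + |∫ s in (0 : ℝ)..(u 0), f s| :=
        add_le_add (Finset.abs_sum_le_sum_abs _ _) le_rfl
    _ ≤ (∑ m ∈ Finset.range (i - 1), M * ((m : ℝ) + 1) ^ (p - 2) * c ^ (-p))
        + M / p * c ^ (-p) :=
        add_le_add (Finset.sum_le_sum fun m hm => hterm m (Finset.mem_range.mp hm)) hbdy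
    _ ≤ M * (∑' n : ℕ, (n : ℝ) ^ (p - 2)) * c ^ (-p) + M / p * c ^ (-p) :=
        add_le_add hsumle le_rfl
    _ = (M * (∑' n : ℕ, (n : ℝ) ^ (p - 2)) + M / p) * c ^ (-p) := by ring

/-- Lemma 1 of the paper: for a kernel `K` with `g_K s = s K s` whose first and second
derivatives `g'`, `g''` are bounded by `M` on `(0,1)`, and `p ∈ (0,1)`, the weighted
Riemann sum error `d_{i,k}(g_K)` satisfies `|d_{i,k}(g_K)| ≤ C u_{i,k}⁻¹ (k+1)^(-p)`. -/
theorem kernel_riemann_sum_error (K g' g'' : ℝ → ℝ) (p M : ℝ)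
    (hp : 0 < p) (hp1 : p < 1) (hM : 0 < M)
    (hderiv1 : ∀ s ∈ Set.Ioo (0 : ℝ) 1, HasDerivAt (fun x => x * K x) (g' s) s)
    (hderiv2 : ∀ s ∈ Set.Ioo (0 : ℝ) 1, HasDerivAt g' (g'' s) s)
    (hbd1 : ∀ s ∈ Set.Ioo (0 : ℝ) 1, |g' s| ≤ M)
    (hbd2 : ∀ s ∈ Set.Ioo (0 : ℝ) 1, |g'' s| ≤ M) :
    ∃ C : ℝ, 0 < C ∧ ∀ k i : ℕ, 2 ≤ i → i ≤ k →
      |(1 / (i : ℝ)) * ∑ j ∈ Finset.Icc 2 i,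
            ((j : ℝ) / ((k : ℝ) + 1)) ^ (p - 1) * g' (((j : ℝ) / ((k : ℝ) + 1)) ^ p)
          - ((i : ℝ) / ((k : ℝ) + 1))⁻¹ *
              ∫ s in (0 : ℝ)..((i : ℝ) / ((k : ℝ) + 1)), s ^ (p - 1) * g' (s ^ p)|
        ≤ C * ((i : ℝ) / ((k : ℝ) + 1))⁻¹ * ((k : ℝ) + 1) ^ (-p) := by
  have hS0 : 0 ≤ ∑' n : ℕ, (n : ℝ) ^ (p - 2) :=
    tsum_nonneg fun n => Real.rpow_nonneg (Nat.cast_nonneg n) _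
  refine ⟨M * (∑' n : ℕ, (n : ℝ) ^ (p - 2)) + M / p,
    add_pos_of_nonneg_of_pos (mul_nonneg hM.le hS0) (div_pos hM hp), ?_⟩
  intro k i hi2 hik
  have key := kernel_rs_aux g' g'' p M hp hp1 hM hderiv2 hbd1 hbd2 k i hi2 hik
  have hc : (0 : ℝ) < (k : ℝ) + 1 := by positivity
  have hi0 : (0 : ℝ) < (i : ℝ) := by
    have : (0 : ℕ) < i := by omega
    exact_mod_cast this
  have hu : (0 : ℝ) < (i : ℝ) / ((k : ℝ) + 1) := by positivity
  have h1i : (1 : ℝ) / (i : ℝ) = ((i : ℝ) / ((k : ℝ) + 1))⁻¹ * (1 / ((k : ℝ) + 1)) := by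
    field_simp
  rw [h1i, mul_assoc, ← mul_sub, abs_mul, abs_of_pos (inv_pos.mpr hu)]
  calc ((i : ℝ) / ((k : ℝ) + 1))⁻¹ *
        |(1 / ((k : ℝ) + 1)) * ∑ j ∈ Finset.Icc 2 i,
            ((j : ℝ) / ((k : ℝ) + 1)) ^ (p - 1) * g' (((j : ℝ) / ((k : ℝ) + 1)) ^ p)
          - ∫ s in (0 : ℝ)..((i : ℝ) / ((k : ℝ) + 1)), s ^ (p - 1) * g' (s ^ p)|
      ≤ ((i : ℝ) / ((k : ℝ) + 1))⁻¹ *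
        ((M * (∑' n : ℕ, (n : ℝ) ^ (p - 2)) + M / p) * ((k : ℝ) + 1) ^ (-p)) :=
        mul_le_mul_of_nonneg_left key (inv_pos.mpr hu).le
    _ = (M * (∑' n : ℕ, (n : ℝ) ^ (p - 2)) + M / p) * ((i : ℝ) / ((k : ℝ) + 1))⁻¹ *
        ((k : ℝ) + 1) ^ (-p) := by ring
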